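/- For complex x, integer n ≥ 2, and any integer k, the algebraic identity ∑_{r=1}^{n-1} sinh(rx)·sin(2πrk/n) = -(1/2)·sinh(nx)·sin(2πk/n) / (cosh(x) - cos(2πk/n)) holds whenever cosh(x) ≠ cos(2πk/n). -/

import Mathlib

open Real Finset

lemma aux15 (x θ : ℂ) (n : ℕ) (hn : 2 ≤ n)
    (hc : Complex.cos (n * θ) = 1) (hs : Complex.sin (n * θ) = 0)
    (hne : Complex.cosh x - Complex.cos θ ≠ 0) :
    (∑ r ∈ Finset.Icc 1 (n - 1),
        Complex.sinh (r * x) * Complex.sin (r * θ)) =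
      -(1 / 2) * (Complex.sinh (n * x) * Complex.sin θ) /
        (Complex.cosh x - Complex.cos θ) := by
  rw [eq_div_iff hne]
  set f : ℕ → ℂ := fun i =>
    Complex.sinh (((i : ℂ) + 1) * x) * Complex.sin ((i : ℂ) * θ) -
      Complex.sinh ((i : ℂ) * x) * Complex.sin (((i : ℂ) + 1) * θ) with hf
  have key : ∀ i : ℕ,
      Complex.sinh (((i : ℂ) + 1) * x) * Complex.sin (((i : ℂ) + 1) * θ) *
        (2 * (Complex.cosh x - Complex.cos θ)) = f (i + 1) - f i := by
    intro i
    simp only [hf]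
    push_cast
    have e1 : ((i : ℂ) + 1 + 1) * x = ((i : ℂ) + 1) * x + x := by ring
    have e2 : (i : ℂ) * x = ((i : ℂ) + 1) * x - x := by ring
    have e3 : ((i : ℂ) + 1 + 1) * θ = ((i : ℂ) + 1) * θ + θ := by ring
    have e4 : (i : ℂ) * θ = ((i : ℂ) + 1) * θ - θ := by ring
    rw [e1, e2, e3, e4, Complex.sinh_add, Complex.sinh_sub, Complex.sin_add,
      Complex.sin_sub]
    ring
  have hsum : (∑ r ∈ Finset.Icc 1 (n - 1),
      Complex.sinh (r * x) * Complex.sin (r * θ)) *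
        (2 * (Complex.cosh x - Complex.cos θ)) = f (n - 1) - f 0 := by
    rw [Finset.sum_mul, ← Finset.Ico_add_one_right_eq_Icc, show n - 1 + 1 = n by omega,
      Finset.sum_Ico_eq_sum_range]
    have : ∀ i ∈ Finset.range (n - 1),
        Complex.sinh ((1 + i : ℕ) * x) * Complex.sin ((1 + i : ℕ) * θ) *
          (2 * (Complex.cosh x - Complex.cos θ)) = f (i + 1) - f i := by
      intro i _
      have := key i
      push_cast at this ⊢
      convert this using 3 <;> ring
    rw [Finset.sum_congr rfl this, Finset.sum_range_sub]
  have hf0 : f 0 = 0 := by simp [hf]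
  have hfn : f (n - 1) = -(Complex.sinh (n * x) * Complex.sin θ) := by
    have hn1 : ((n - 1 : ℕ) : ℂ) = (n : ℂ) - 1 := by
      push_cast [Nat.cast_sub (by omega : 1 ≤ n)]; ring
    have e5 : ((n : ℂ) - 1) * θ = (n : ℂ) * θ - θ := by ring
    simp only [hf, hn1, sub_add_cancel, e5, Complex.sin_sub, hc, hs]
    ring
  rw [hf0, hfn, sub_zero] at hsum
  linear_combination hsum / 2

theorem stmt15 (x : ℂ) (n : ℕ) (hn : 2 ≤ n) (k : ℤ)
    (h : Complex.cosh x ≠ (Real.cos (2 * π * k / n) : ℂ)) :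
    (∑ r ∈ Finset.Icc 1 (n - 1),
        Complex.sinh (r * x) * (Real.sin (2 * π * r * k / n) : ℂ)) =
      -(1 / 2) * (Complex.sinh (n * x) * (Real.sin (2 * π * k / n) : ℂ)) /
        (Complex.cosh x - (Real.cos (2 * π * k / n) : ℂ)) := by
  have hn0 : (n : ℝ) ≠ 0 := by positivity
  set θ : ℂ := ((2 * π * k / n : ℝ) : ℂ) with hθ
  have hr : (n : ℝ) * (2 * π * k / n) = k * (2 * π) := by
    field_simp
  have hnθ : (n : ℂ) * θ = ((k * (2 * π) : ℝ) : ℂ) := by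
    rw [hθ, ← hr]; push_cast; ring
  have hc : Complex.cos ((n : ℂ) * θ) = 1 := by
    rw [hnθ, ← Complex.ofReal_cos, Real.cos_int_mul_two_pi, Complex.ofReal_one]
  have hs : Complex.sin ((n : ℂ) * θ) = 0 := by
    rw [hnθ, ← Complex.ofReal_sin,
      show ((k : ℝ) * (2 * π)) = ((2 * k : ℤ) : ℝ) * π by push_cast; ring,
      Real.sin_int_mul_pi, Complex.ofReal_zero]
  have hcosθ : (Real.cos (2 * π * k / n) : ℂ) = Complex.cos θ := by
    rw [hθ, Complex.ofReal_cos]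
  have hsinθ : (Real.sin (2 * π * k / n) : ℂ) = Complex.sin θ := by
    rw [hθ, Complex.ofReal_sin]
  have hterm : ∀ r : ℕ, (Real.sin (2 * π * r * k / n) : ℂ) = Complex.sin (r * θ) := by
    intro r
    have : (2 * π * r * k / n : ℝ) = r * (2 * π * k / n) := by ring
    rw [this, Complex.ofReal_sin, Complex.ofReal_mul, Complex.ofReal_natCast, hθ]
  rw [hcosθ] at h
  rw [hcosθ, hsinθ]
  simp only [hterm]
  exact aux15 x θ n hn hc hs (sub_ne_zero_of_ne h)
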